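/- arXiv:1805.07179 — 3 statements merged into one kernel-verified Lean document; each statement's English description precedes it below -/
import Mathlib

section
/- If a Markov chain (X_k) on ℝ^d with transition kernel K_X has stationary density ρ_X, and the augmented chain Z_k = (X_k, Y_k) arises from a Markov chain acceptance-rejection algorithm with proposal densities q(·|x), then the measure on ℝ^{2d} with density ρ_Z(x,y) = ρ_X(x) q(y|x) is stationary for the augmented chain. -/
open MeasureTheory ENNReal

/-- If the Markov chain `(X_k)` of an acceptance-rejection algorithm has
stationary density `ρ_X` (stationarity of the marginal transition kernel expressed in
integral form against all nonnegative measurable functions), then the density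
`ρ_Z(x,y) = ρ_X(x) q(y|x)` is stationary for the augmented chain `Z_k = (X_k, Y_k)`,
whose transition kernel moves `(x,y)` to `(x, y')` with `y' ∼ q(·|x)` with probability
`1 - α(x,y)` and to `(y, y')` with `y' ∼ q(·|y)` with probability `α(x,y)`. -/
theorem augmented_chain_stationary
    {d : ℕ} (ρX : (Fin d → ℝ) → ℝ) (q : (Fin d → ℝ) → (Fin d → ℝ) → ℝ)
    (α : (Fin d → ℝ) → (Fin d → ℝ) → ℝ)
    (hρX_nonneg : ∀ x, 0 ≤ ρX x)
    (hq_nonneg : ∀ x y, 0 ≤ q x y)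
    (hα : ∀ x y, α x y ∈ Set.Icc (0:ℝ) 1)
    (hρX_meas : Measurable ρX)
    (hq_meas : Measurable (Function.uncurry q))
    (hα_meas : Measurable (Function.uncurry α))
    (hq_prob : ∀ x, ∫⁻ y, ENNReal.ofReal (q x y) = 1)
    (hρX_prob : ∫⁻ x, ENNReal.ofReal (ρX x) = 1)
    -- stationarity of the marginal chain `(X_k)` with respect to the density `ρ_X`:
    (hstat : ∀ f : (Fin d → ℝ) → ℝ≥0∞, Measurable f →
      ∫⁻ x, (∫⁻ y, (ENNReal.ofReal (1 - α x y) * f x + ENNReal.ofReal (α x y) * f y)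
          * ENNReal.ofReal (q x y))
        ∂(volume.withDensity fun x => ENNReal.ofReal (ρX x))
      = ∫⁻ x, f x ∂(volume.withDensity fun x => ENNReal.ofReal (ρX x))) :
    -- stationarity of the augmented chain with respect to `ρ_Z(x,y) = ρ_X(x) q(y|x)`:
    ∀ g : ((Fin d → ℝ) × (Fin d → ℝ)) → ℝ≥0∞, Measurable g →
      ∫⁻ p, (ENNReal.ofReal (1 - α p.1 p.2)
              * ∫⁻ y', g (p.1, y') * ENNReal.ofReal (q p.1 y')) +
            (ENNReal.ofReal (α p.1 p.2)
              * ∫⁻ y', g (p.2, y') * ENNReal.ofReal (q p.2 y'))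
        ∂((volume.prod volume).withDensity fun p => ENNReal.ofReal (ρX p.1 * q p.1 p.2))
      = ∫⁻ p, g p
        ∂((volume.prod volume).withDensity fun p => ENNReal.ofReal (ρX p.1 * q p.1 p.2)) := by
  intro g hg
  set f : (Fin d → ℝ) → ℝ≥0∞ := fun x => ∫⁻ y', g (x, y') * ENNReal.ofReal (q x y') with hfdef
  have hq2 : Measurable fun p : (Fin d → ℝ) × (Fin d → ℝ) => ENNReal.ofReal (q p.1 p.2) :=
    hq_meas.ennreal_ofReal
  have hfmeas : Measurable f := Measurable.lintegral_prod_right' (hg.mul hq2)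
  have key := hstat f hfmeas
  have hdens : Measurable fun p : (Fin d → ℝ) × (Fin d → ℝ) =>
      ENNReal.ofReal (ρX p.1 * q p.1 p.2) :=
    ((hρX_meas.comp measurable_fst).mul hq_meas).ennreal_ofReal
  have hρdens : Measurable fun x : Fin d → ℝ => ENNReal.ofReal (ρX x) := hρX_meas.ennreal_ofReal
  -- the kernel-applied integrand as a function of the pair
  have hG : Measurable fun p : (Fin d → ℝ) × (Fin d → ℝ) =>
      ENNReal.ofReal (1 - α p.1 p.2) * f p.1 + ENNReal.ofReal (α p.1 p.2) * f p.2 :=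
    (((measurable_const.sub hα_meas).ennreal_ofReal).mul (hfmeas.comp measurable_fst)).add
      ((hα_meas.ennreal_ofReal).mul (hfmeas.comp measurable_snd))
  have hGq : Measurable fun p : (Fin d → ℝ) × (Fin d → ℝ) =>
      (ENNReal.ofReal (1 - α p.1 p.2) * f p.1 + ENNReal.ofReal (α p.1 p.2) * f p.2)
        * ENNReal.ofReal (q p.1 p.2) := hG.mul hq2
  -- rewrite the hypothesis `key` through the `withDensity`
  rw [lintegral_withDensity_eq_lintegral_mul _ hρdens
      (Measurable.lintegral_prod_right' hGq),
    lintegral_withDensity_eq_lintegral_mul _ hρdens hfmeas] at key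
  -- rewrite the goal through the `withDensity`
  rw [lintegral_withDensity_eq_lintegral_mul _ hdens hG,
    lintegral_withDensity_eq_lintegral_mul _ hdens hg]
  simp only [Pi.mul_apply]
  rw [lintegral_prod (fun p : (Fin d → ℝ) × (Fin d → ℝ) => ENNReal.ofReal (ρX p.1 * q p.1 p.2) *
        (ENNReal.ofReal (1 - α p.1 p.2) * f p.1 + ENNReal.ofReal (α p.1 p.2) * f p.2))
        (hdens.mul hG).aemeasurable,
    lintegral_prod (fun p : (Fin d → ℝ) × (Fin d → ℝ) => ENNReal.ofReal (ρX p.1 * q p.1 p.2) * g p)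
        (hdens.mul hg).aemeasurable]
  have L1 : ∀ x, (∫⁻ y, ENNReal.ofReal (ρX x * q x y) *
        (ENNReal.ofReal (1 - α x y) * f x + ENNReal.ofReal (α x y) * f y))
      = ENNReal.ofReal (ρX x) *
        ∫⁻ y, (ENNReal.ofReal (1 - α x y) * f x + ENNReal.ofReal (α x y) * f y)
          * ENNReal.ofReal (q x y) := by
    intro x
    have hm : Measurable fun y =>
        (ENNReal.ofReal (1 - α x y) * f x + ENNReal.ofReal (α x y) * f y)
          * ENNReal.ofReal (q x y) := by
      simpa [Function.comp_def] using hGq.comp (measurable_prodMk_left (x := x))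
    rw [← lintegral_const_mul _ hm]
    refine lintegral_congr fun y => ?_
    rw [ENNReal.ofReal_mul (hρX_nonneg x)]
    ring
  have L2 : ∀ x, (∫⁻ y, ENNReal.ofReal (ρX x * q x y) * g (x, y))
      = ENNReal.ofReal (ρX x) * f x := by
    intro x
    have hm : Measurable fun y => g (x, y) * ENNReal.ofReal (q x y) := by
      simpa [Function.comp_def] using (hg.mul hq2).comp (measurable_prodMk_left (x := x))
    rw [hfdef]
    simp only []
    rw [← lintegral_const_mul _ hm]
    refine lintegral_congr fun y => ?_
    rw [ENNReal.ofReal_mul (hρX_nonneg x)]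
    ring
  calc ∫⁻ x, ∫⁻ y, ENNReal.ofReal (ρX x * q x y) *
        (ENNReal.ofReal (1 - α x y) * f x + ENNReal.ofReal (α x y) * f y)
      = ∫⁻ x, ENNReal.ofReal (ρX x) *
          ∫⁻ y, (ENNReal.ofReal (1 - α x y) * f x + ENNReal.ofReal (α x y) * f y)
            * ENNReal.ofReal (q x y) := lintegral_congr L1
    _ = ∫⁻ x, ENNReal.ofReal (ρX x) * f x := key
    _ = ∫⁻ x, ∫⁻ y, ENNReal.ofReal (ρX x * q x y) * g (x, y) :=
        (lintegral_congr L2).symm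
end

section
/- Suppose a Markov chain (X_k) with kernel K_X on ℝ^d is geometrically ergodic toward μ, i.e., there exists r > 1 such that Σ_{m≥1} r^m ‖K_X^m(x,·) − μ‖_TV < ∞ for all x. Then the augmented acceptance-rejection chain Z_k = (X_k, Y_k) is geometrically ergodic toward μ⊙q: for all (x,y), Σ_{m≥1} r^m ‖K_Z^m((x,y),·) − μ⊙q‖_TV < ∞. -/
open MeasureTheory ENNReal

/-- The measure `μ ⊙ q` on `ℝ^d × ℝ^d` with `(μ ⊙ q)(A × B) = ∫_A ∫_B q(y|x) dy dμ(x)`. -/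
noncomputable def odotMeasure {d : ℕ} (q : (Fin d → ℝ) → (Fin d → ℝ) → ℝ)
    (μ : Measure (Fin d → ℝ)) : Measure ((Fin d → ℝ) × (Fin d → ℝ)) :=
  (μ.prod volume).withDensity fun p => ENNReal.ofReal (q p.1 p.2)

/-- The proposal measure `q(·|x)` as a measure on `ℝ^d`. -/
noncomputable def propMeasure {d : ℕ} (q : (Fin d → ℝ) → (Fin d → ℝ) → ℝ)
    (x : Fin d → ℝ) : Measure (Fin d → ℝ) :=
  volume.withDensity fun y => ENNReal.ofReal (q x y)

/-- Marginal transition kernel `K_X` of the acceptance-rejection chain: draw `y ∼ q(·|x)`,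
move to `y` with probability `α(x,y)` and stay at `x` otherwise. -/
noncomputable def accRejKernel {d : ℕ} (q : (Fin d → ℝ) → (Fin d → ℝ) → ℝ)
    (α : (Fin d → ℝ) → (Fin d → ℝ) → ℝ) (x : Fin d → ℝ) : Measure (Fin d → ℝ) :=
  (propMeasure q x).bind fun y =>
    ENNReal.ofReal (1 - α x y) • Measure.dirac x + ENNReal.ofReal (α x y) • Measure.dirac y

/-- Transition kernel `K_Z` of the augmented chain `Z_k = (X_k, Y_k)`:
`K_Z((x,y), A×B) = (1-α(x,y)) 1_A(x) q(B|x) + α(x,y) 1_A(y) q(B|y)`. -/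
noncomputable def augKernel {d : ℕ} (q : (Fin d → ℝ) → (Fin d → ℝ) → ℝ)
    (α : (Fin d → ℝ) → (Fin d → ℝ) → ℝ) (p : (Fin d → ℝ) × (Fin d → ℝ)) :
    Measure ((Fin d → ℝ) × (Fin d → ℝ)) :=
  ENNReal.ofReal (1 - α p.1 p.2) • (Measure.dirac p.1).prod (propMeasure q p.1)
    + ENNReal.ofReal (α p.1 p.2) • (Measure.dirac p.2).prod (propMeasure q p.2)

/-- `m`-step iterate `κ^m(x, ·)` of a transition kernel, with `κ^0(x,·) = δ_x`. -/
noncomputable def iterKernel {β : Type*} [MeasurableSpace β]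
    (κ : β → Measure β) : ℕ → β → Measure β
  | 0, x => Measure.dirac x
  | (m + 1), x => (iterKernel κ m x).bind κ

/-- Total variation distance between two measures (as a supremum over measurable events). -/
noncomputable def tvDist {β : Type*} [MeasurableSpace β] (μ ν : Measure β) : ℝ :=
  ⨆ s : Set β, |(μ s).toReal - (ν s).toReal|

section TV
variable {β : Type*} [MeasurableSpace β] (A B : Measure β)

theorem tvDist_nonneg : 0 ≤ tvDist A B :=
  Real.iSup_nonneg fun _ => abs_nonneg _

theorem tvDist_bddAbove [IsFiniteMeasure A] [IsFiniteMeasure B] :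
    BddAbove (Set.range fun s => |(A s).toReal - (B s).toReal|) := by
  refine ⟨(A Set.univ).toReal + (B Set.univ).toReal, ?_⟩
  rintro x ⟨s, rfl⟩
  have hA : (A s).toReal ≤ (A Set.univ).toReal :=
    ENNReal.toReal_mono (measure_ne_top _ _) (measure_mono (Set.subset_univ _))
  have hB : (B s).toReal ≤ (B Set.univ).toReal :=
    ENNReal.toReal_mono (measure_ne_top _ _) (measure_mono (Set.subset_univ _))
  have h1 : (0:ℝ) ≤ (A s).toReal := ENNReal.toReal_nonneg
  have h2 : (0:ℝ) ≤ (B s).toReal := ENNReal.toReal_nonneg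
  rw [abs_sub_le_iff]
  constructor <;> nlinarith

theorem abs_sub_le_tvDist [IsFiniteMeasure A] [IsFiniteMeasure B] (s : Set β) :
    |(A s).toReal - (B s).toReal| ≤ tvDist A B :=
  le_ciSup (tvDist_bddAbove A B) s

theorem tvDist_comm : tvDist A B = tvDist B A := by
  unfold tvDist
  congr 1; funext s; rw [abs_sub_comm]

theorem tvDist_le_of_forall_measurable [IsFiniteMeasure A] [IsFiniteMeasure B] {c : ℝ}
    (hc : 0 ≤ c)
    (h1 : ∀ s, MeasurableSet s → A s ≤ B s + ENNReal.ofReal c)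
    (h2 : ∀ s, MeasurableSet s → B s ≤ A s + ENNReal.ofReal c) :
    tvDist A B ≤ c := by
  refine Real.iSup_le (fun s => ?_) hc
  have hA : A s ≤ B s + ENNReal.ofReal c := by
    calc A s ≤ A (toMeasurable B s) := measure_mono (subset_toMeasurable _ _)
    _ ≤ B (toMeasurable B s) + ENNReal.ofReal c :=
        h1 _ (measurableSet_toMeasurable _ _)
    _ = B s + ENNReal.ofReal c := by rw [measure_toMeasurable]
  have hB : B s ≤ A s + ENNReal.ofReal c := by
    calc B s ≤ B (toMeasurable A s) := measure_mono (subset_toMeasurable _ _)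
    _ ≤ A (toMeasurable A s) + ENNReal.ofReal c :=
        h2 _ (measurableSet_toMeasurable _ _)
    _ = A s + ENNReal.ofReal c := by rw [measure_toMeasurable]
  have hA' : (A s).toReal ≤ (B s).toReal + c := by
    have := ENNReal.toReal_mono (by finiteness) hA
    rwa [ENNReal.toReal_add (measure_ne_top _ _) ENNReal.ofReal_ne_top,
      ENNReal.toReal_ofReal hc] at this
  have hB' : (B s).toReal ≤ (A s).toReal + c := by
    have := ENNReal.toReal_mono (by finiteness) hB
    rwa [ENNReal.toReal_add (measure_ne_top _ _) ENNReal.ofReal_ne_top,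
      ENNReal.toReal_ofReal hc] at this
  rw [abs_sub_le_iff]
  constructor <;> linarith

theorem lintegral_le_lintegral_add_tvDist [IsProbabilityMeasure A] [IsProbabilityMeasure B]
    {g : β → ℝ≥0∞} (hg : Measurable g) (hg1 : ∀ u, g u ≤ 1) :
    ∫⁻ u, g u ∂A ≤ (∫⁻ u, g u ∂B) + ENNReal.ofReal (tvDist A B) := by
  set f : β → ℝ := fun u => (g u).toReal with hf
  have hgf : ∀ u, ENNReal.ofReal (f u) = g u := fun u =>
    ENNReal.ofReal_toReal (ne_top_of_le_ne_top ENNReal.one_ne_top (hg1 u))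
  have hfm : Measurable f := hg.ennreal_toReal
  have hf1 : ∀ u, f u ≤ 1 := fun u => by
    simpa using ENNReal.toReal_mono ENNReal.one_ne_top (hg1 u)
  have key : ∀ (P : Measure β), ∫⁻ u, g u ∂P = ∫⁻ t in Set.Ioi (0:ℝ), P {a | t < f a} := by
    intro P
    rw [← lintegral_eq_lintegral_meas_lt P (Filter.Eventually.of_forall fun u => ENNReal.toReal_nonneg)
      hfm.aemeasurable]
    exact lintegral_congr fun u => (hgf u).symm
  rw [key A, key B]
  set D := tvDist A B with hD
  have hpoint : ∀ t ∈ Set.Ioi (0:ℝ),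
      A {a | t < f a} ≤ B {a | t < f a} +
        (Set.Ioc (0:ℝ) 1).indicator (fun _ => ENNReal.ofReal D) t := by
    intro t ht
    by_cases h1 : t ≤ 1
    · rw [Set.indicator_of_mem (Set.mem_Ioc.mpr ⟨ht, h1⟩)]
      set s := {a | t < f a}
      have habs := abs_sub_le_tvDist A B s
      have h2 : (A s).toReal ≤ (B s).toReal + D := by
        have := le_of_abs_le habs
        linarith
      calc A s = ENNReal.ofReal (A s).toReal := (ENNReal.ofReal_toReal (measure_ne_top _ _)).symm
      _ ≤ ENNReal.ofReal ((B s).toReal + D) := ENNReal.ofReal_le_ofReal h2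
      _ ≤ ENNReal.ofReal (B s).toReal + ENNReal.ofReal D := ENNReal.ofReal_add_le
      _ = B s + ENNReal.ofReal D := by rw [ENNReal.ofReal_toReal (measure_ne_top _ _)]
    · have : {a | t < f a} = ∅ := by
        ext a; simp only [Set.mem_setOf_eq, Set.mem_empty_iff_false, iff_false, not_lt]
        linarith [hf1 a]
      simp [this]
  calc ∫⁻ t in Set.Ioi (0:ℝ), A {a | t < f a}
      ≤ ∫⁻ t in Set.Ioi (0:ℝ), (B {a | t < f a} +
          (Set.Ioc (0:ℝ) 1).indicator (fun _ => ENNReal.ofReal D) t) := by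
        refine lintegral_mono_ae ?_
        filter_upwards [ae_restrict_mem measurableSet_Ioi] with t ht using hpoint t ht
    _ = (∫⁻ t in Set.Ioi (0:ℝ), B {a | t < f a}) +
          ∫⁻ t in Set.Ioi (0:ℝ), (Set.Ioc (0:ℝ) 1).indicator (fun _ => ENNReal.ofReal D) t := by
        rw [lintegral_add_right]
        exact measurable_const.indicator measurableSet_Ioc
    _ ≤ (∫⁻ t in Set.Ioi (0:ℝ), B {a | t < f a}) + ENNReal.ofReal D := by
        gcongr
        rw [lintegral_indicator measurableSet_Ioc, setLIntegral_const,
          Measure.restrict_apply measurableSet_Ioc]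
        rw [Set.inter_eq_left.mpr Set.Ioc_subset_Ioi_self, Real.volume_Ioc]
        simp

end TV

namespace AugAux

variable {d : ℕ} (q : (Fin d → ℝ) → (Fin d → ℝ) → ℝ) (α : (Fin d → ℝ) → (Fin d → ℝ) → ℝ)

/-- The kernel `Λ u = δ_u ⊗ q(·|u)`. -/
noncomputable def lamK (u : Fin d → ℝ) : Measure ((Fin d → ℝ) × (Fin d → ℝ)) :=
  (Measure.dirac u).prod (propMeasure q u)

/-- The mixture kernel `(1-α(u,v)) δ_u + α(u,v) δ_v`. -/
noncomputable def mixM (u v : Fin d → ℝ) : Measure (Fin d → ℝ) :=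
  ENNReal.ofReal (1 - α u v) • Measure.dirac u + ENNReal.ofReal (α u v) • Measure.dirac v

variable (hq_meas : Measurable (Function.uncurry q))
  (hq_prob : ∀ x, ∫⁻ y, ENNReal.ofReal (q x y) = 1)
  (hα : ∀ x y, α x y ∈ Set.Icc (0:ℝ) 1) (hα_meas : Measurable (Function.uncurry α))

section
include hq_prob

theorem propMeasure_prob (x : Fin d → ℝ) : IsProbabilityMeasure (propMeasure q x) := by
  constructor
  rw [propMeasure, withDensity_apply _ MeasurableSet.univ, Measure.restrict_univ]
  exact hq_prob x

theorem lamK_prob (u : Fin d → ℝ) : IsProbabilityMeasure (lamK q u) := by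
  haveI := propMeasure_prob q hq_prob u
  rw [lamK]; infer_instance

theorem lamK_eq_map (u : Fin d → ℝ) :
    lamK q u = (propMeasure q u).map (Prod.mk u) := by
  haveI := propMeasure_prob q hq_prob u
  exact Measure.dirac_prod _

theorem lamK_apply (u : Fin d → ℝ) {s : Set ((Fin d → ℝ) × (Fin d → ℝ))}
    (hs : MeasurableSet s) :
    lamK q u s = ∫⁻ v, s.indicator (fun p => ENNReal.ofReal (q p.1 p.2)) (u, v) := by
  rw [lamK_eq_map q hq_prob, Measure.map_apply measurable_prodMk_left hs, propMeasure,
    withDensity_apply _ (measurable_prodMk_left hs), ← lintegral_indicator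
      (measurable_prodMk_left hs)]
  refine lintegral_congr fun v => ?_
  by_cases h : (u, v) ∈ s
  · rw [Set.indicator_of_mem h, Set.indicator_of_mem (show v ∈ Prod.mk u ⁻¹' s from h)]
  · rw [Set.indicator_of_notMem h, Set.indicator_of_notMem (show v ∉ Prod.mk u ⁻¹' s from h)]

include hq_meas

theorem measurable_lamK : Measurable (lamK q) := by
  refine Measure.measurable_of_measurable_coe _ fun s hs => ?_
  simp_rw [lamK_apply q hq_prob _ hs]
  exact Measurable.lintegral_prod_right' ((hq_meas.ennreal_ofReal).indicator hs)

theorem odot_eq_bind (μ : Measure (Fin d → ℝ)) [SFinite μ] :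
    odotMeasure q μ = μ.bind (lamK q) := by
  ext s hs
  rw [Measure.bind_apply hs (measurable_lamK q hq_meas hq_prob).aemeasurable, odotMeasure,
    withDensity_apply _ hs, ← lintegral_indicator hs,
    lintegral_prod _ (((show Measurable fun p : (Fin d → ℝ) × (Fin d → ℝ) =>
      ENNReal.ofReal (q p.1 p.2) from hq_meas.ennreal_ofReal).indicator hs)).aemeasurable]
  exact lintegral_congr fun u => (lamK_apply q hq_prob u hs).symm

end

include hα in
theorem mixM_prob (u v : Fin d → ℝ) : IsProbabilityMeasure (mixM α u v) := by
  constructor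
  have h := hα u v
  simp only [mixM, Measure.coe_add, Pi.add_apply, Measure.smul_apply, smul_eq_mul,
    measure_univ, mul_one]
  rw [← ENNReal.ofReal_add (by linarith [h.2]) h.1]
  norm_num

include hα_meas in
theorem measurable_mixM_right (u : Fin d → ℝ) : Measurable (mixM α u) := by
  refine Measure.measurable_of_measurable_coe _ fun s hs => ?_
  simp only [mixM, Measure.coe_add, Pi.add_apply, Measure.smul_apply, smul_eq_mul,
    Measure.dirac_apply' _ hs]
  refine Measurable.add (Measurable.mul ?_ measurable_const) (Measurable.mul ?_ ?_)
  · exact (measurable_const.sub (hα_meas.comp measurable_prodMk_left)).ennreal_ofReal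
  · exact (hα_meas.comp measurable_prodMk_left).ennreal_ofReal
  · exact measurable_one.indicator hs

theorem KX_eq (x : Fin d → ℝ) :
    accRejKernel q α x = (propMeasure q x).bind (mixM α x) := rfl

include hq_meas hα_meas in
theorem measurable_KX : Measurable (accRejKernel q α) := by
  refine Measure.measurable_of_measurable_coe _ fun s hs => ?_
  have hmix : ∀ x, Measurable (mixM α x) := fun x => measurable_mixM_right α hα_meas x
  have key : ∀ x, accRejKernel q α x s
      = ∫⁻ y, ENNReal.ofReal (q x y) * mixM α x y s := by
    intro x
    rw [KX_eq, Measure.bind_apply hs (hmix x).aemeasurable, propMeasure,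
      lintegral_withDensity_eq_lintegral_mul _
        (show Measurable fun y => ENNReal.ofReal (q x y) from
          (hq_meas.comp measurable_prodMk_left).ennreal_ofReal)
        (show Measurable fun y => (mixM α x y) s from
          (Measure.measurable_coe hs).comp (hmix x))]
    rfl
  simp_rw [key]
  refine Measurable.lintegral_prod_right'
    (f := fun p : (Fin d → ℝ) × (Fin d → ℝ) => ENNReal.ofReal (q p.1 p.2) * mixM α p.1 p.2 s) ?_
  refine Measurable.mul (hq_meas.ennreal_ofReal) ?_
  simp only [mixM, Measure.coe_add, Pi.add_apply, Measure.smul_apply, smul_eq_mul,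
    Measure.dirac_apply' _ hs]
  refine Measurable.add (Measurable.mul ?_ ?_) (Measurable.mul ?_ ?_)
  · exact (measurable_const.sub hα_meas).ennreal_ofReal
  · exact (measurable_one.indicator hs).comp measurable_fst
  · exact hα_meas.ennreal_ofReal
  · exact (measurable_one.indicator hs).comp measurable_snd

include hq_meas hq_prob hα_meas in
theorem measurable_KZ : Measurable (augKernel q α) := by
  refine Measure.measurable_of_measurable_coe _ fun s hs => ?_
  have : ∀ p : (Fin d → ℝ) × (Fin d → ℝ), augKernel q α p s
      = ENNReal.ofReal (1 - α p.1 p.2) * lamK q p.1 s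
        + ENNReal.ofReal (α p.1 p.2) * lamK q p.2 s := by
    intro p
    simp [augKernel, lamK]
  simp_rw [this]
  refine Measurable.add (Measurable.mul ?_ ?_) (Measurable.mul ?_ ?_)
  · exact (measurable_const.sub hα_meas).ennreal_ofReal
  · exact ((Measure.measurable_coe hs).comp (measurable_lamK q hq_meas hq_prob)).comp measurable_fst
  · exact hα_meas.ennreal_ofReal
  · exact ((Measure.measurable_coe hs).comp (measurable_lamK q hq_meas hq_prob)).comp measurable_snd

theorem bind_smul_add (c c' : ℝ≥0∞) {β γ : Type*} [MeasurableSpace β] [MeasurableSpace γ]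
    (P Q : Measure β) (f : β → Measure γ) (hf : Measurable f) :
    (c • P + c' • Q).bind f = c • P.bind f + c' • Q.bind f := by
  ext s hs
  rw [Measure.bind_apply hs hf.aemeasurable]
  simp only [Measure.coe_add, Pi.add_apply, Measure.smul_apply, smul_eq_mul]
  rw [lintegral_add_measure, lintegral_smul_measure, lintegral_smul_measure,
    Measure.bind_apply hs hf.aemeasurable, Measure.bind_apply hs hf.aemeasurable]
  simp only [smul_eq_mul]

include hq_meas hq_prob in
theorem KZ_eq (p : (Fin d → ℝ) × (Fin d → ℝ)) :
    augKernel q α p = (mixM α p.1 p.2).bind (lamK q) := by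
  rw [mixM, bind_smul_add _ _ _ _ _ (measurable_lamK q hq_meas hq_prob),
    Measure.dirac_bind (measurable_lamK q hq_meas hq_prob),
    Measure.dirac_bind (measurable_lamK q hq_meas hq_prob)]
  rfl

include hq_meas hq_prob hα_meas in
theorem lam_bind_KZ (u : Fin d → ℝ) :
    (lamK q u).bind (augKernel q α) = (accRejKernel q α u).bind (lamK q) := by
  have hmix : Measurable (mixM α u) := measurable_mixM_right α hα_meas u
  ext s hs
  rw [lamK_eq_map q hq_prob, Measure.bind_apply hs (measurable_KZ q α hq_meas hq_prob hα_meas).aemeasurable,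
    lintegral_map (show Measurable fun p : (Fin d → ℝ) × (Fin d → ℝ) => augKernel q α p s from
      (Measure.measurable_coe hs).comp (measurable_KZ q α hq_meas hq_prob hα_meas))
      measurable_prodMk_left,
    Measure.bind_apply hs (measurable_lamK q hq_meas hq_prob).aemeasurable, KX_eq,
    Measure.lintegral_bind hmix.aemeasurable (show Measurable fun w => lamK q w s from
      (Measure.measurable_coe hs).comp (measurable_lamK q hq_meas hq_prob)).aemeasurable]
  refine lintegral_congr fun v => ?_
  rw [KZ_eq q α hq_meas hq_prob,
    Measure.bind_apply hs (measurable_lamK q hq_meas hq_prob).aemeasurable]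


theorem bind_prob {β γ : Type*} [MeasurableSpace β] [MeasurableSpace γ]
    (P : Measure β) [IsProbabilityMeasure P] (f : β → Measure γ) (hf : Measurable f)
    (hp : ∀ a, IsProbabilityMeasure (f a)) : IsProbabilityMeasure (P.bind f) := by
  constructor
  rw [Measure.bind_apply MeasurableSet.univ hf.aemeasurable]
  have h : ∀ a, f a Set.univ = 1 := fun a => (hp a).measure_univ
  simp [h]

theorem smul_add_prob {a : ℝ} (ha : a ∈ Set.Icc (0:ℝ) 1) {β : Type*} [MeasurableSpace β]
    (P Q : Measure β) [IsProbabilityMeasure P] [IsProbabilityMeasure Q] :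
    IsProbabilityMeasure (ENNReal.ofReal (1 - a) • P + ENNReal.ofReal a • Q) := by
  constructor
  simp only [Measure.coe_add, Pi.add_apply, Measure.smul_apply, smul_eq_mul,
    measure_univ, mul_one]
  rw [← ENNReal.ofReal_add (by linarith [ha.2]) ha.1]
  norm_num

theorem iter_prob {β : Type*} [MeasurableSpace β] (κ : β → Measure β) (hκ : Measurable κ)
    (hp : ∀ a, IsProbabilityMeasure (κ a)) (m : ℕ) (x : β) :
    IsProbabilityMeasure (iterKernel κ m x) := by
  induction m with
  | zero => rw [iterKernel]; infer_instance
  | succ m ih => rw [iterKernel]; exact bind_prob _ _ hκ hp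

include hq_prob hα hα_meas in
theorem KX_prob (x : Fin d → ℝ) : IsProbabilityMeasure (accRejKernel q α x) := by
  haveI := propMeasure_prob q hq_prob x
  rw [KX_eq]
  exact bind_prob _ _ (measurable_mixM_right α hα_meas x) (fun y => mixM_prob α hα x y)

include hq_meas hq_prob hα_meas in
theorem iter_KZ_eq (x y : Fin d → ℝ) (m : ℕ) :
    iterKernel (augKernel q α) (m + 1) (x, y)
      = (ENNReal.ofReal (1 - α x y) • iterKernel (accRejKernel q α) m x
          + ENNReal.ofReal (α x y) • iterKernel (accRejKernel q α) m y).bind (lamK q) := by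
  induction m with
  | zero =>
      show (Measure.dirac (x, y)).bind (augKernel q α) = _
      rw [Measure.dirac_bind (measurable_KZ q α hq_meas hq_prob hα_meas),
        KZ_eq q α hq_meas hq_prob]
      rfl
  | succ m ih =>
      show (iterKernel (augKernel q α) (m + 1) (x, y)).bind (augKernel q α) = _
      rw [ih, Measure.bind_bind (measurable_lamK q hq_meas hq_prob).aemeasurable
        (measurable_KZ q α hq_meas hq_prob hα_meas).aemeasurable]
      have heq : (fun u => (lamK q u).bind (augKernel q α))
          = fun u => (accRejKernel q α u).bind (lamK q) :=
        funext fun u => lam_bind_KZ q α hq_meas hq_prob hα_meas u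
      rw [heq, ← Measure.bind_bind (measurable_KX q α hq_meas hα_meas).aemeasurable
        (measurable_lamK q hq_meas hq_prob).aemeasurable]
      congr 1
      rw [bind_smul_add _ _ _ _ _ (measurable_KX q α hq_meas hα_meas)]
      rfl

include hq_meas hq_prob hα hα_meas in
theorem tv_bound (μ : Measure (Fin d → ℝ)) [IsProbabilityMeasure μ] (x y : Fin d → ℝ) (m : ℕ) :
    tvDist (iterKernel (augKernel q α) (m + 1) (x, y)) (odotMeasure q μ)
      ≤ tvDist (iterKernel (accRejKernel q α) m x) μ
        + tvDist (iterKernel (accRejKernel q α) m y) μ := by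
  have hΛ : Measurable (lamK q) := measurable_lamK q hq_meas hq_prob
  have hΛp : ∀ u, IsProbabilityMeasure (lamK q u) := lamK_prob q hq_prob
  haveI hPx : IsProbabilityMeasure (iterKernel (accRejKernel q α) m x) :=
    iter_prob _ (measurable_KX q α hq_meas hα_meas) (KX_prob q α hq_prob hα hα_meas) m x
  haveI hPy : IsProbabilityMeasure (iterKernel (accRejKernel q α) m y) :=
    iter_prob _ (measurable_KX q α hq_meas hα_meas) (KX_prob q α hq_prob hα hα_meas) m y
  set Px := iterKernel (accRejKernel q α) m x
  set Py := iterKernel (accRejKernel q α) m y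
  set c := ENNReal.ofReal (1 - α x y) with hc_def
  set c' := ENNReal.ofReal (α x y) with hc'_def
  set Dx := tvDist Px μ with hDx
  set Dy := tvDist Py μ with hDy
  have hDx0 : 0 ≤ Dx := tvDist_nonneg _ _
  have hDy0 : 0 ≤ Dy := tvDist_nonneg _ _
  haveI hmixp : IsProbabilityMeasure (c • Px + c' • Py) := smul_add_prob (hα x y) Px Py
  haveI hA : IsProbabilityMeasure ((c • Px + c' • Py).bind (lamK q)) :=
    bind_prob _ _ hΛ hΛp
  haveI hB : IsProbabilityMeasure (μ.bind (lamK q)) := bind_prob _ _ hΛ hΛp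
  rw [iter_KZ_eq q α hq_meas hq_prob hα_meas, odot_eq_bind q hq_meas hq_prob]
  have hcsum : c + c' = 1 := by
    rw [hc_def, hc'_def, ← ENNReal.ofReal_add (by linarith [(hα x y).2]) (hα x y).1]
    norm_num
  have hc1 : c ≤ 1 := ENNReal.ofReal_le_one.mpr (by linarith [(hα x y).1])
  have hc'1 : c' ≤ 1 := ENNReal.ofReal_le_one.mpr (hα x y).2
  refine tvDist_le_of_forall_measurable _ _ (show (0:ℝ) ≤ Dx + Dy by linarith) (fun s hs => ?_) (fun s hs => ?_)
  · -- A ≤ B + D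
    have hg : Measurable fun u => lamK q u s := (Measure.measurable_coe hs).comp hΛ
    have hg1 : ∀ u, lamK q u s ≤ 1 := fun u => by
      haveI := hΛp u; exact prob_le_one
    have hAs : ((c • Px + c' • Py).bind (lamK q)) s
        = c * ∫⁻ u, lamK q u s ∂Px + c' * ∫⁻ u, lamK q u s ∂Py := by
      rw [Measure.bind_apply hs hΛ.aemeasurable]
      simp only [lintegral_add_measure, lintegral_smul_measure, smul_eq_mul]
    have hBs : (μ.bind (lamK q)) s = ∫⁻ u, lamK q u s ∂μ := Measure.bind_apply hs hΛ.aemeasurable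
    rw [hAs, hBs, ENNReal.ofReal_add hDx0 hDy0]
    have hIx : ∫⁻ u, lamK q u s ∂Px ≤ (∫⁻ u, lamK q u s ∂μ) + ENNReal.ofReal Dx :=
      lintegral_le_lintegral_add_tvDist Px μ hg hg1
    have hIy : ∫⁻ u, lamK q u s ∂Py ≤ (∫⁻ u, lamK q u s ∂μ) + ENNReal.ofReal Dy :=
      lintegral_le_lintegral_add_tvDist Py μ hg hg1
    calc c * ∫⁻ u, lamK q u s ∂Px + c' * ∫⁻ u, lamK q u s ∂Py
        ≤ c * ((∫⁻ u, lamK q u s ∂μ) + ENNReal.ofReal Dx)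
          + c' * ((∫⁻ u, lamK q u s ∂μ) + ENNReal.ofReal Dy) := by gcongr
      _ = (c + c') * ∫⁻ u, lamK q u s ∂μ + (c * ENNReal.ofReal Dx + c' * ENNReal.ofReal Dy) := by
          ring
      _ ≤ 1 * ∫⁻ u, lamK q u s ∂μ + (1 * ENNReal.ofReal Dx + 1 * ENNReal.ofReal Dy) := by
          rw [hcsum]; gcongr
      _ = (∫⁻ u, lamK q u s ∂μ) + (ENNReal.ofReal Dx + ENNReal.ofReal Dy) := by
          simp [one_mul]
  · -- B ≤ A + D
    have hg : Measurable fun u => lamK q u s := (Measure.measurable_coe hs).comp hΛ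
    have hg1 : ∀ u, lamK q u s ≤ 1 := fun u => by
      haveI := hΛp u; exact prob_le_one
    have hAs : ((c • Px + c' • Py).bind (lamK q)) s
        = c * ∫⁻ u, lamK q u s ∂Px + c' * ∫⁻ u, lamK q u s ∂Py := by
      rw [Measure.bind_apply hs hΛ.aemeasurable]
      simp only [lintegral_add_measure, lintegral_smul_measure, smul_eq_mul]
    have hBs : (μ.bind (lamK q)) s = ∫⁻ u, lamK q u s ∂μ := Measure.bind_apply hs hΛ.aemeasurable
    rw [hAs, hBs, ENNReal.ofReal_add hDx0 hDy0]
    have hIx' : ∫⁻ u, lamK q u s ∂μ ≤ (∫⁻ u, lamK q u s ∂Px) + ENNReal.ofReal Dx := by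
      have := lintegral_le_lintegral_add_tvDist μ Px hg hg1
      rwa [tvDist_comm μ Px] at this
    have hIy' : ∫⁻ u, lamK q u s ∂μ ≤ (∫⁻ u, lamK q u s ∂Py) + ENNReal.ofReal Dy := by
      have := lintegral_le_lintegral_add_tvDist μ Py hg hg1
      rwa [tvDist_comm μ Py] at this
    calc ∫⁻ u, lamK q u s ∂μ
        = (c + c') * ∫⁻ u, lamK q u s ∂μ := by rw [hcsum, one_mul]
      _ = c * ∫⁻ u, lamK q u s ∂μ + c' * ∫⁻ u, lamK q u s ∂μ := by ring
      _ ≤ c * ((∫⁻ u, lamK q u s ∂Px) + ENNReal.ofReal Dx)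
          + c' * ((∫⁻ u, lamK q u s ∂Py) + ENNReal.ofReal Dy) := by gcongr
      _ = (c * ∫⁻ u, lamK q u s ∂Px + c' * ∫⁻ u, lamK q u s ∂Py)
          + (c * ENNReal.ofReal Dx + c' * ENNReal.ofReal Dy) := by ring
      _ ≤ (c * ∫⁻ u, lamK q u s ∂Px + c' * ∫⁻ u, lamK q u s ∂Py)
          + (1 * ENNReal.ofReal Dx + 1 * ENNReal.ofReal Dy) := by gcongr
      _ = (c * ∫⁻ u, lamK q u s ∂Px + c' * ∫⁻ u, lamK q u s ∂Py)
          + (ENNReal.ofReal Dx + ENNReal.ofReal Dy) := by simp [one_mul]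

end AugAux

/-- If the marginal acceptance-rejection chain `(X_k)` is geometrically
ergodic toward `μ`, i.e. `∑_{m≥1} r^m ‖K_X^m(x,·) − μ‖_TV < ∞` for all `x` (for some
`r > 1`), then the augmented chain `Z_k = (X_k,Y_k)` is geometrically ergodic toward
`μ ⊙ q`: for all `(x,y)`, `∑_{m≥1} r^m ‖K_Z^m((x,y),·) − μ ⊙ q‖_TV < ∞`. -/
theorem augmented_chain_geometrically_ergodic
    {d : ℕ} (q : (Fin d → ℝ) → (Fin d → ℝ) → ℝ)
    (α : (Fin d → ℝ) → (Fin d → ℝ) → ℝ)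
    (hq_nonneg : ∀ x y, 0 ≤ q x y)
    (hq_meas : Measurable (Function.uncurry q))
    (hq_prob : ∀ x, ∫⁻ y, ENNReal.ofReal (q x y) = 1)
    (hα : ∀ x y, α x y ∈ Set.Icc (0:ℝ) 1)
    (hα_meas : Measurable (Function.uncurry α))
    (μ : Measure (Fin d → ℝ)) [IsProbabilityMeasure μ]
    (r : ℝ) (hr : 1 < r)
    (hgeo : ∀ x : Fin d → ℝ,
      Summable fun m : ℕ => r ^ (m + 1) * tvDist (iterKernel (accRejKernel q α) (m + 1) x) μ) :
    ∀ x y : Fin d → ℝ,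
      Summable fun m : ℕ =>
        r ^ (m + 1) * tvDist (iterKernel (augKernel q α) (m + 1) (x, y)) (odotMeasure q μ) := by
  intro x y
  have hr0 : (0:ℝ) ≤ r := by linarith
  have hsum : ∀ z : Fin d → ℝ,
      Summable fun m : ℕ => r ^ (m + 1) * tvDist (iterKernel (accRejKernel q α) m z) μ := by
    intro z
    rw [← summable_nat_add_iff 1]
    refine ((hgeo z).mul_left r).congr fun m => ?_
    rw [pow_succ]
    ring
  refine Summable.of_nonneg_of_le
    (fun m => mul_nonneg (pow_nonneg hr0 _) (tvDist_nonneg _ _))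
    (fun m => ?_) ((hsum x).add (hsum y))
  have hb := AugAux.tv_bound q α hq_meas hq_prob hα hα_meas μ x y m
  calc r ^ (m + 1) * tvDist (iterKernel (augKernel q α) (m + 1) (x, y)) (odotMeasure q μ)
      ≤ r ^ (m + 1) * (tvDist (iterKernel (accRejKernel q α) m x) μ
          + tvDist (iterKernel (accRejKernel q α) m y) μ) := by
        exact mul_le_mul_of_nonneg_left hb (pow_nonneg hr0 _)
    _ = r ^ (m + 1) * tvDist (iterKernel (accRejKernel q α) m x) μ
          + r ^ (m + 1) * tvDist (iterKernel (accRejKernel q α) m y) μ := by ring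
end

section
/- With notation as in the augmented acceptance-rejection chain, for every m ≥ 1 and every (x,y) ∈ ℝ^{2d}, the m-step kernel satisfies K_Z^m((x,y), ·) = [(1-α(x,y)) K_X^{m-1}(x,·) + α(x,y) K_X^{m-1}(y,·)] ⊙ q, where K_X^0(x,·) is the Dirac measure at x. -/
open MeasureTheory ENNReal

/-! ### Auxiliary material -/

/-- `δ_x ⊗ q(·|x)` as a measure on the product space. -/
noncomputable def prodProp {d : ℕ} (q : (Fin d → ℝ) → (Fin d → ℝ) → ℝ)
    (x : Fin d → ℝ) : Measure ((Fin d → ℝ) × (Fin d → ℝ)) :=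
  (propMeasure q x).map (Prod.mk x)

instance {d : ℕ} (q : (Fin d → ℝ) → (Fin d → ℝ) → ℝ) (x : Fin d → ℝ) :
    SFinite (propMeasure q x) :=
  inferInstanceAs (SFinite (volume.withDensity fun y => ENNReal.ofReal (q x y)))

section Aux
variable {d : ℕ} {q α : (Fin d → ℝ) → (Fin d → ℝ) → ℝ}

lemma prodProp_apply (x : Fin d → ℝ)
    {s : Set ((Fin d → ℝ) × (Fin d → ℝ))} (hs : MeasurableSet s) :
    prodProp q x s
      = ∫⁻ y, s.indicator (fun p => ENNReal.ofReal (q p.1 p.2)) (x, y) := by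
  rw [prodProp, Measure.map_apply measurable_prodMk_left hs, propMeasure,
    withDensity_apply _ (measurable_prodMk_left hs),
    ← lintegral_indicator (measurable_prodMk_left hs)]
  congr 1

lemma measurable_prodProp (hq_meas : Measurable (Function.uncurry q)) :
    Measurable (prodProp q) := by
  apply Measure.measurable_measure.mpr
  intro s hs
  have hF : Measurable (s.indicator fun p : (Fin d → ℝ) × (Fin d → ℝ) =>
      ENNReal.ofReal (q p.1 p.2)) :=
    (measurable_ofReal.comp hq_meas).indicator hs
  simp only [prodProp_apply _ hs]
  exact hF.lintegral_prod_right'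

lemma isProb_propMeasure (hq_prob : ∀ x, ∫⁻ y, ENNReal.ofReal (q x y) = 1)
    (x : Fin d → ℝ) : IsProbabilityMeasure (propMeasure q x) :=
  ⟨by rw [propMeasure, withDensity_apply _ MeasurableSet.univ, Measure.restrict_univ]
      exact hq_prob x⟩

lemma augKernel_eq (p : (Fin d → ℝ) × (Fin d → ℝ)) :
    augKernel q α p = ENNReal.ofReal (1 - α p.1 p.2) • prodProp q p.1
      + ENNReal.ofReal (α p.1 p.2) • prodProp q p.2 := by
  rw [augKernel, prodProp, prodProp, Measure.dirac_prod, Measure.dirac_prod]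

lemma measurable_augKernel (hq_meas : Measurable (Function.uncurry q))
    (hα_meas : Measurable (Function.uncurry α)) : Measurable (augKernel q α) := by
  apply Measure.measurable_measure.mpr
  intro s hs
  have h1 : Measurable fun p : (Fin d → ℝ) × (Fin d → ℝ) => prodProp q p.1 s :=
    (Measure.measurable_coe hs).comp ((measurable_prodProp hq_meas).comp measurable_fst)
  have h2 : Measurable fun p : (Fin d → ℝ) × (Fin d → ℝ) => prodProp q p.2 s :=
    (Measure.measurable_coe hs).comp ((measurable_prodProp hq_meas).comp measurable_snd)
  simp only [augKernel_eq, Measure.coe_add, Measure.coe_smul, Pi.add_apply, Pi.smul_apply,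
    smul_eq_mul]
  exact ((measurable_ofReal.comp (measurable_const.sub hα_meas)).mul h1).add
    ((measurable_ofReal.comp hα_meas).mul h2)

lemma measurable_inner (hα_meas : Measurable (Function.uncurry α)) (x : Fin d → ℝ) :
    Measurable fun y : Fin d → ℝ =>
      ENNReal.ofReal (1 - α x y) • Measure.dirac x + ENNReal.ofReal (α x y) • Measure.dirac y := by
  apply Measure.measurable_measure.mpr
  intro s hs
  have hax : Measurable fun y => α x y := hα_meas.comp measurable_prodMk_left
  simp only [Measure.coe_add, Measure.coe_smul, Pi.add_apply, Pi.smul_apply, smul_eq_mul,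
    Measure.dirac_apply' _ hs]
  exact ((measurable_ofReal.comp (measurable_const.sub hax)).mul measurable_const).add
    ((measurable_ofReal.comp hax).mul (measurable_one.indicator hs))

lemma accRej_apply (hq_meas : Measurable (Function.uncurry q))
    (hα_meas : Measurable (Function.uncurry α)) (x : Fin d → ℝ)
    {s : Set (Fin d → ℝ)} (hs : MeasurableSet s) :
    accRejKernel q α x s = ∫⁻ y, ENNReal.ofReal (q x y) *
      (ENNReal.ofReal (1 - α x y) * s.indicator 1 x
        + ENNReal.ofReal (α x y) * s.indicator 1 y) := by
  rw [accRejKernel, Measure.bind_apply hs (measurable_inner hα_meas x).aemeasurable]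
  have hqx : Measurable fun y => ENNReal.ofReal (q x y) :=
    measurable_ofReal.comp (hq_meas.comp measurable_prodMk_left)
  have hax : Measurable fun y => α x y := hα_meas.comp measurable_prodMk_left
  have hg : Measurable fun y => ENNReal.ofReal (1 - α x y) * s.indicator 1 x
      + ENNReal.ofReal (α x y) * s.indicator 1 y :=
    ((measurable_ofReal.comp (measurable_const.sub hax)).mul measurable_const).add
      ((measurable_ofReal.comp hax).mul (measurable_one.indicator hs))
  have hinner : ∀ a, (ENNReal.ofReal (1 - α x a) • Measure.dirac x
        + ENNReal.ofReal (α x a) • Measure.dirac a) s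
      = ENNReal.ofReal (1 - α x a) * s.indicator 1 x
        + ENNReal.ofReal (α x a) * s.indicator 1 a := by
    intro a
    simp [Measure.add_apply, Measure.smul_apply, smul_eq_mul, Measure.dirac_apply' _ hs]
  simp_rw [hinner]
  rw [propMeasure, lintegral_withDensity_eq_lintegral_mul _ hqx hg]
  rfl

lemma measurable_accRej (hq_meas : Measurable (Function.uncurry q))
    (hα_meas : Measurable (Function.uncurry α)) : Measurable (accRejKernel q α) := by
  apply Measure.measurable_measure.mpr
  intro s hs
  simp only [accRej_apply hq_meas hα_meas _ hs]
  have hF : Measurable fun p : (Fin d → ℝ) × (Fin d → ℝ) => ENNReal.ofReal (q p.1 p.2) *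
      (ENNReal.ofReal (1 - α p.1 p.2) * s.indicator 1 p.1
        + ENNReal.ofReal (α p.1 p.2) * s.indicator 1 p.2) :=
    (measurable_ofReal.comp hq_meas).mul
      (((measurable_ofReal.comp (measurable_const.sub hα_meas)).mul
          ((measurable_one.indicator hs).comp measurable_fst)).add
        ((measurable_ofReal.comp hα_meas).mul
          ((measurable_one.indicator hs).comp measurable_snd)))
  exact hF.lintegral_prod_right'

lemma accRej_univ (hq_meas : Measurable (Function.uncurry q))
    (hα_meas : Measurable (Function.uncurry α))
    (hq_prob : ∀ x, ∫⁻ y, ENNReal.ofReal (q x y) = 1)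
    (hα : ∀ x y, α x y ∈ Set.Icc (0:ℝ) 1) (x : Fin d → ℝ) :
    accRejKernel q α x Set.univ = 1 := by
  rw [accRej_apply hq_meas hα_meas x MeasurableSet.univ]
  have h1 : ∀ y, ENNReal.ofReal (1 - α x y) * Set.indicator Set.univ 1 x
      + ENNReal.ofReal (α x y) * Set.indicator Set.univ 1 y = 1 := by
    intro y
    rw [Set.indicator_univ, Pi.one_apply, Pi.one_apply, mul_one, mul_one,
      ← ENNReal.ofReal_add (by linarith [(hα x y).2]) (hα x y).1]
    norm_num
  simp_rw [h1, mul_one]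
  exact hq_prob x

lemma isProb_iter (hq_meas : Measurable (Function.uncurry q))
    (hα_meas : Measurable (Function.uncurry α))
    (hq_prob : ∀ x, ∫⁻ y, ENNReal.ofReal (q x y) = 1)
    (hα : ∀ x y, α x y ∈ Set.Icc (0:ℝ) 1) (m : ℕ) (x : Fin d → ℝ) :
    IsProbabilityMeasure (iterKernel (accRejKernel q α) m x) := by
  induction m with
  | zero => exact Measure.dirac.isProbabilityMeasure
  | succ n ih =>
    constructor
    show ((iterKernel (accRejKernel q α) n x).bind (accRejKernel q α)) Set.univ = 1
    rw [Measure.bind_apply MeasurableSet.univ (measurable_accRej hq_meas hα_meas).aemeasurable]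
    simp_rw [accRej_univ hq_meas hα_meas hq_prob hα]
    simpa using ih.measure_univ

lemma odot_bind (hq_meas : Measurable (Function.uncurry q))
    (μ : Measure (Fin d → ℝ)) [SFinite μ] :
    odotMeasure q μ = μ.bind (prodProp q) := by
  ext s hs
  have hg : Measurable fun p : (Fin d → ℝ) × (Fin d → ℝ) => ENNReal.ofReal (q p.1 p.2) :=
    measurable_ofReal.comp hq_meas
  rw [Measure.bind_apply hs (measurable_prodProp hq_meas).aemeasurable, odotMeasure,
    withDensity_apply _ hs, ← lintegral_indicator hs,
    lintegral_prod _ (hg.indicator hs).aemeasurable]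
  exact lintegral_congr fun x => (prodProp_apply x hs).symm

lemma bind_add_smul {β γ : Type*} [MeasurableSpace β] [MeasurableSpace γ]
    (μ ν : Measure β) (a b : ℝ≥0∞) {f : β → Measure γ} (hf : Measurable f) :
    (a • μ + b • ν).bind f = a • μ.bind f + b • ν.bind f := by
  ext s hs
  simp [Measure.bind_apply hs hf.aemeasurable, lintegral_add_measure, lintegral_smul_measure]

lemma exchange (hq_meas : Measurable (Function.uncurry q))
    (hα_meas : Measurable (Function.uncurry α)) (x : Fin d → ℝ) :
    (prodProp q x).bind (augKernel q α) = (accRejKernel q α x).bind (prodProp q) := by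
  ext s hs
  have hGs : Measurable fun z => prodProp q z s :=
    (Measure.measurable_coe hs).comp (measurable_prodProp hq_meas)
  have hZs : Measurable fun p : (Fin d → ℝ) × (Fin d → ℝ) => augKernel q α p s :=
    (Measure.measurable_coe hs).comp (measurable_augKernel hq_meas hα_meas)
  rw [Measure.bind_apply hs (measurable_augKernel hq_meas hα_meas).aemeasurable,
    Measure.bind_apply hs (measurable_prodProp hq_meas).aemeasurable,
    prodProp, lintegral_map hZs measurable_prodMk_left,
    accRejKernel, Measure.lintegral_bind (measurable_inner hα_meas x).aemeasurable hGs.aemeasurable]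
  refine lintegral_congr fun y => ?_
  rw [augKernel_eq, lintegral_add_measure, lintegral_smul_measure, lintegral_smul_measure,
    lintegral_dirac' _ hGs, lintegral_dirac' _ hGs]
  simp [smul_eq_mul]

end Aux

/-- For every `m ≥ 1` (written `m + 1` with `m : ℕ`) and every `(x,y)`,
the `m+1`-step augmented kernel satisfies
`K_Z^{m+1}((x,y), ·) = [(1-α(x,y)) K_X^m(x,·) + α(x,y) K_X^m(y,·)] ⊙ q`. -/
theorem augKernel_iterate_eq_odot
    {d : ℕ} (q : (Fin d → ℝ) → (Fin d → ℝ) → ℝ)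
    (α : (Fin d → ℝ) → (Fin d → ℝ) → ℝ)
    (hq_nonneg : ∀ x y, 0 ≤ q x y)
    (hq_meas : Measurable (Function.uncurry q))
    (hq_prob : ∀ x, ∫⁻ y, ENNReal.ofReal (q x y) = 1)
    (hα : ∀ x y, α x y ∈ Set.Icc (0:ℝ) 1)
    (hα_meas : Measurable (Function.uncurry α)) :
    ∀ (m : ℕ) (x y : Fin d → ℝ),
      iterKernel (augKernel q α) (m + 1) (x, y)
        = odotMeasure q
            (ENNReal.ofReal (1 - α x y) • iterKernel (accRejKernel q α) m x
              + ENNReal.ofReal (α x y) • iterKernel (accRejKernel q α) m y) := by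
  have hG := measurable_prodProp hq_meas
  have hKZ := measurable_augKernel hq_meas hα_meas
  have hK := measurable_accRej hq_meas hα_meas
  have hfin : ∀ (a b : ℝ) (μ ν : Measure (Fin d → ℝ)),
      IsProbabilityMeasure μ → IsProbabilityMeasure ν →
      IsFiniteMeasure (ENNReal.ofReal a • μ + ENNReal.ofReal b • ν) := by
    intro a b μ ν hμ hν
    constructor
    simp only [Measure.coe_add, Measure.coe_smul, Pi.add_apply, Pi.smul_apply, smul_eq_mul,
      measure_univ, mul_one]
    exact ENNReal.add_lt_top.mpr ⟨ofReal_lt_top, ofReal_lt_top⟩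
  intro m
  induction m with
  | zero =>
    intro x y
    have h1 : iterKernel (augKernel q α) 1 (x, y) = augKernel q α (x, y) := by
      show (Measure.dirac (x, y)).bind (augKernel q α) = _
      exact Measure.dirac_bind hKZ (x, y)
    haveI := hfin (1 - α x y) (α x y) (Measure.dirac x) (Measure.dirac y)
      Measure.dirac.isProbabilityMeasure Measure.dirac.isProbabilityMeasure
    rw [h1, augKernel_eq]
    show _ = odotMeasure q (ENNReal.ofReal (1 - α x y) • Measure.dirac x
      + ENNReal.ofReal (α x y) • Measure.dirac y)
    rw [odot_bind hq_meas, bind_add_smul _ _ _ _ hG, Measure.dirac_bind hG,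
      Measure.dirac_bind hG]
  | succ m ih =>
    intro x y
    haveI hpx := isProb_iter hq_meas hα_meas hq_prob hα m x
    haveI hpy := isProb_iter hq_meas hα_meas hq_prob hα m y
    haveI := hfin (1 - α x y) (α x y) _ _ hpx hpy
    haveI := hfin (1 - α x y) (α x y) _ _
      (isProb_iter hq_meas hα_meas hq_prob hα (m + 1) x)
      (isProb_iter hq_meas hα_meas hq_prob hα (m + 1) y)
    set ν := ENNReal.ofReal (1 - α x y) • iterKernel (accRejKernel q α) m x
      + ENNReal.ofReal (α x y) • iterKernel (accRejKernel q α) m y with hν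
    have step : iterKernel (augKernel q α) (m + 2) (x, y)
        = (odotMeasure q ν).bind (augKernel q α) := by
      show (iterKernel (augKernel q α) (m + 1) (x, y)).bind (augKernel q α) = _
      rw [ih x y]
    rw [step, odot_bind hq_meas, Measure.bind_bind hG.aemeasurable hKZ.aemeasurable]
    have hswap : (fun a => (prodProp q a).bind (augKernel q α))
        = fun a => (accRejKernel q α a).bind (prodProp q) := by
      funext a; exact exchange hq_meas hα_meas a
    rw [hswap, ← Measure.bind_bind hK.aemeasurable hG.aemeasurable, hν, bind_add_smul _ _ _ _ hK]
    show _ = odotMeasure q (ENNReal.ofReal (1 - α x y) • iterKernel (accRejKernel q α) (m+1) x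
      + ENNReal.ofReal (α x y) • iterKernel (accRejKernel q α) (m+1) y)
    rw [odot_bind hq_meas]
    rfl
end
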